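/- Let k be an integer with 0 ≤ k ≤ m-1, and define a = (γ^(2m+6k+2) + γ^(m+3k+1) + 1)/(3γ^(m+3k+1)), b = (γ^(2m) + γ^(m+3k+1) + γ^(6k+2))/(3γ^(m+3k+1)), c = (γ^(6k+2) + γ^(3k+1) + 1)/(3γ^(3k+1)) in F_q. Then the map g : F_q → F_q given by g(x) = a·x^(2m+1) + b·x^(m+1) + c·x is a bijection of F_q, satisfies g(g(x)) = x for all x ∈ F_q, and the set {x ∈ F_q : g(x) = x} has exactly m+1 elements. -/

import Mathlib

theorem stmt0 (q m : ℕ) (F : Type*) [Field F] [Fintype F]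
    (hq : Fintype.card F = q) (hodd : Odd q) (hq3 : q % 3 = 1)
    (hm : m = (q - 1) / 3)
    (γ : Fˣ) (hγ : ∀ x : Fˣ, x ∈ Subgroup.zpowers γ)
    (k : ℕ) (hk : k ≤ m - 1)
    (a b c : F)
    (ha : a = ((γ : F)^(2*m+6*k+2) + (γ : F)^(m+3*k+1) + 1) / (3 * (γ : F)^(m+3*k+1)))
    (hb : b = ((γ : F)^(2*m) + (γ : F)^(m+3*k+1) + (γ : F)^(6*k+2)) / (3 * (γ : F)^(m+3*k+1)))
    (hc : c = ((γ : F)^(6*k+2) + (γ : F)^(3*k+1) + 1) / (3 * (γ : F)^(3*k+1)))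
    (g : F → F)
    (hg : ∀ x : F, g x = a * x^(2*m+1) + b * x^(m+1) + c * x) :
    Function.Bijective g ∧ (∀ x : F, g (g x) = x) ∧
      {x : F | g x = x}.ncard = m + 1 := by
  have hq2 : 1 < q := hq ▸ Fintype.one_lt_card
  have h3m : q - 1 = 3 * m := by omega
  have hm1 : 0 < m := by omega
  -- order of γ
  have horder : orderOf γ = q - 1 := by
    rw [orderOf_eq_card_of_forall_mem_zpowers hγ, Nat.card_units, Nat.card_eq_fintype_card, hq]
  have hγq : γ ^ (q - 1) = 1 := by
    rw [← horder]; exact pow_orderOf_eq_one γ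
  set ω : F := (γ : F) ^ m with hωdef
  set u : F := (γ : F) ^ (3 * k + 1) with hudef
  have hγ0 : (γ : F) ≠ 0 := Units.ne_zero γ
  have hω0 : ω ≠ 0 := pow_ne_zero _ hγ0
  have hu0 : u ≠ 0 := pow_ne_zero _ hγ0
  have hγqF : (γ : F) ^ (q - 1) = 1 := by
    rw [← Units.val_pow_eq_pow_val, hγq, Units.val_one]
  have hω3 : ω ^ 3 = 1 := by
    rw [hωdef, ← pow_mul, show m * 3 = q - 1 by omega]; exact hγqF
  have hωne1 : ω ≠ 1 := by
    intro h
    have h' : γ ^ m = 1 := Units.ext (by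
      rw [Units.val_pow_eq_pow_val, Units.val_one]; exact h)
    have hdvd := orderOf_dvd_of_pow_eq_one h'
    rw [horder] at hdvd
    have := Nat.le_of_dvd hm1 hdvd
    omega
  have hω : ω ^ 2 + ω + 1 = 0 := by
    have hfac : (ω - 1) * (ω ^ 2 + ω + 1) = 0 := by linear_combination hω3
    rcases mul_eq_zero.mp hfac with h | h
    · exact absurd (sub_eq_zero.mp h) hωne1
    · exact h
  have h30 : (3 : F) ≠ 0 := by
    intro h3
    have hcube : (ω - 1) ^ 3 = 0 := by linear_combination hω3 + (ω - ω ^ 2) * h3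
    exact hωne1 (sub_eq_zero.mp (pow_eq_zero_iff (by norm_num)|>.mp hcube))
  have hu1 : u ≠ 1 := by
    intro h
    have h' : γ ^ (3 * k + 1) = 1 := Units.ext (by
      rw [Units.val_pow_eq_pow_val, Units.val_one]; exact h)
    have hdvd := orderOf_dvd_of_pow_eq_one h'
    rw [horder, h3m] at hdvd
    obtain ⟨t, ht⟩ := hdvd
    have h3 : (3 : ℕ) ∣ 3 * k + 1 := ht ▸ ⟨m * t, by ring⟩
    omega
  -- exponent rewrites
  have e1 : (γ : F) ^ (2*m+6*k+2) = ω ^ 2 * u ^ 2 := by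
    show _ = ((γ : F) ^ m) ^ 2 * ((γ : F) ^ (3 * k + 1)) ^ 2
    rw [← pow_mul, ← pow_mul, ← pow_add]; congr 1 <;> omega
  have e2 : (γ : F) ^ (m+3*k+1) = ω * u := by
    show _ = (γ : F) ^ m * (γ : F) ^ (3 * k + 1)
    rw [← pow_add]; congr 1 <;> omega
  have e3 : (γ : F) ^ (2*m) = ω ^ 2 := by
    show _ = ((γ : F) ^ m) ^ 2
    rw [← pow_mul]; congr 1 <;> omega
  have e4 : (γ : F) ^ (6*k+2) = u ^ 2 := by
    show _ = ((γ : F) ^ (3 * k + 1)) ^ 2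
    rw [← pow_mul]; congr 1 <;> omega
  have hden : (3 : F) * (ω * u) ≠ 0 := by
    exact mul_ne_zero h30 (mul_ne_zero hω0 hu0)
  have hden2 : (3 : F) * u ≠ 0 := mul_ne_zero h30 hu0
  have hA : a * (3 * (ω * u)) = ω ^ 2 * u ^ 2 + ω * u + 1 := by
    rw [ha, e1, e2, div_mul_cancel₀ _ hden]
  have hB : b * (3 * (ω * u)) = ω ^ 2 + ω * u + u ^ 2 := by
    rw [hb, e3, e2, e4, div_mul_cancel₀ _ hden]
  have hC : c * (3 * u) = u ^ 2 + u + 1 := by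
    rw [hc, e4, hudef, div_mul_cancel₀ _ hden2]
  -- eigenvalues
  have hl1 : a + b + c = 1 := by
    have h : (a + b + c) * (3 * (ω * u)) = 1 * (3 * (ω * u)) := by
      linear_combination hA + hB + ω * hC + (u ^ 2 + 1) * hω
    exact mul_right_cancel₀ hden h
  have hlω : a * ω ^ 2 + b * ω + c = u := by
    have h : (a * ω ^ 2 + b * ω + c) * (3 * (ω * u)) = u * (3 * (ω * u)) := by
      linear_combination ω ^ 2 * hA + ω * hB + ω * hC +
        (ω ^ 2 * u ^ 2 + ω * u + ω - ω * u ^ 2) * hω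
    exact mul_right_cancel₀ hden h
  have hlω2 : (a * (ω ^ 2) ^ 2 + b * ω ^ 2 + c) * u = 1 := by
    have h : ((a * (ω ^ 2) ^ 2 + b * ω ^ 2 + c) * u) * (3 * (ω * u)) = 1 * (3 * (ω * u)) := by
      linear_combination ω ^ 4 * u * hA + ω ^ 2 * u * hB + ω * u * hC +
        (ω ^ 4 * u ^ 3 + ω ^ 3 * u ^ 2 - ω ^ 3 * u ^ 3 + 2 * ω ^ 2 * u - ω ^ 2 * u ^ 2
          + ω * u ^ 3 - 2 * ω * u + ω * u ^ 2) * hω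
    exact mul_right_cancel₀ hden h
  -- g in terms of x^m
  have gform : ∀ x : F, g x = (a * (x ^ m) ^ 2 + b * (x ^ m) + c) * x := by
    intro x
    rw [hg, show 2*m+1 = m*2+1 by ring, pow_succ, pow_mul,
      show m+1 = m+1 from rfl, pow_succ]
    ring
  have g1 : ∀ x : F, x ^ m = 1 → g x = x := by
    intro x hx; rw [gform, hx]; linear_combination x * hl1
  have gω : ∀ x : F, x ^ m = ω → g x = u * x := by
    intro x hx; rw [gform, hx]; linear_combination x * hlω
  have gω2 : ∀ x : F, x ^ m = ω ^ 2 → g x = u⁻¹ * x := by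
    intro x hx
    rw [gform, hx, eq_inv_of_mul_eq_one_left hlω2]
  have g0 : g 0 = 0 := by
    rw [hg, zero_pow (by omega), zero_pow (by omega)]; ring
  have hum : u ^ m = ω := by
    show ((γ : F) ^ (3 * k + 1)) ^ m = (γ : F) ^ m
    rw [← pow_mul, show (3 * k + 1) * m = (q - 1) * k + m by rw [h3m]; ring, pow_add, pow_mul,
      hγqF, one_pow, one_mul]
  have hxm : ∀ x : F, x ≠ 0 → x ^ m = 1 ∨ x ^ m = ω ∨ x ^ m = ω ^ 2 := by
    intro x hx
    have hx3 : (x ^ m) ^ 3 = 1 := by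
      rw [← pow_mul, show m * 3 = q - 1 by omega, ← hq]
      exact FiniteField.pow_card_sub_one_eq_one x hx
    have hfac : (x ^ m - 1) * ((x ^ m - ω) * (x ^ m - ω ^ 2)) = 0 := by
      linear_combination hx3 + (-(x ^ m) ^ 2 + ω * (x ^ m) - ω + 1) * hω
    rcases mul_eq_zero.mp hfac with h | h
    · exact Or.inl (sub_eq_zero.mp h)
    · rcases mul_eq_zero.mp h with h | h
      · exact Or.inr (Or.inl (sub_eq_zero.mp h))
      · exact Or.inr (Or.inr (sub_eq_zero.mp h))
  have hinv : ∀ x : F, g (g x) = x := by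
    intro x
    by_cases hx : x = 0
    · rw [hx, g0, g0]
    rcases hxm x hx with h | h | h
    · rw [g1 x h, g1 x h]
    · rw [gω x h, gω2 (u * x) (by rw [mul_pow, hum, h]; ring), inv_mul_cancel_left₀ hu0]
    · rw [gω2 x h, gω (u⁻¹ * x) (by
        rw [mul_pow, inv_pow, hum, h, pow_two, inv_mul_cancel_left₀ hω0]),
        mul_inv_cancel_left₀ hu0]
  refine ⟨Function.Involutive.bijective hinv, hinv, ?_⟩
  -- fixed points
  have hSet : {x : F | g x = x} = insert (0 : F) ↑(Polynomial.nthRootsFinset m (1 : F)) := by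
    ext x
    simp only [Set.mem_setOf_eq, Set.mem_insert_iff, Finset.coe_sort_coe, Finset.mem_coe,
      Polynomial.mem_nthRootsFinset hm1 (1 : F)]
    constructor
    · intro hgx
      by_cases hx : x = 0
      · exact Or.inl hx
      refine Or.inr ?_
      rcases hxm x hx with h | h | h
      · exact h
      · rw [gω x h] at hgx
        exact absurd (mul_right_cancel₀ hx (by rw [hgx, one_mul])) hu1
      · rw [gω2 x h] at hgx
        have : u⁻¹ = 1 := mul_right_cancel₀ hx (by rw [hgx, one_mul])
        exact absurd (inv_eq_one.mp this) hu1
    · rintro (rfl | h)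
      · exact g0
      · exact g1 x h
  -- primitive m-th root
  have horder3 : orderOf (γ ^ 3) = m := by
    rw [orderOf_pow, horder, h3m, Nat.gcd_comm, Nat.gcd_eq_left ⟨m, rfl⟩,
      Nat.mul_div_cancel_left _ (by norm_num)]
  have hprim : IsPrimitiveRoot ((γ : F) ^ 3) m := by
    have h1 : IsPrimitiveRoot (γ ^ 3) m := horder3 ▸ IsPrimitiveRoot.orderOf (γ ^ 3)
    have := IsPrimitiveRoot.coe_units_iff.mpr h1
    simpa using this
  have h0notin : (0 : F) ∉ (↑(Polynomial.nthRootsFinset m (1 : F)) : Set F) := by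
    simp only [Finset.mem_coe, Polynomial.mem_nthRootsFinset hm1 (1 : F)]
    rw [zero_pow (by omega)]
    exact zero_ne_one
  rw [hSet, Set.ncard_insert_of_notMem h0notin (Set.toFinite _),
    Set.ncard_coe_finset, hprim.card_nthRootsFinset]
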